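/- Let n ≥ 2 and let a be an odd integer with n < a ≤ 2n−2. Then the minimum cardinality of an a-dominating set of the rook's graph K_n □ K_n equals ((a−1)/2)·n + ⌈ n(2n−a+1) / (2(2n−a)) ⌉. -/

import Mathlib

open Finset

open Finset

/-- shifting `j ↦ (j+k) % x` is a bijection of `range x`, so filtering a predicate
through it preserves cardinality. -/
lemma cyc_count (x k : ℕ) (hx : 0 < x) (Q : ℕ → Prop) [DecidablePred Q] :
    ((Finset.range x).filter (fun j => Q ((j + k) % x))).card
      = ((Finset.range x).filter Q).card := by
  have hmodlt : ∀ j : ℕ, (j + k) % x < x := fun j => Nat.mod_lt _ hx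
  set k' : ℕ := x - k % x with hk'
  have hround : ∀ j < x, ((j + k) % x + k') % x = j := by
    intro j hj
    rw [Nat.mod_add_mod]
    have h1 := Nat.div_add_mod k x
    have h2 : k % x < x := Nat.mod_lt _ hx
    have h3 : j + k + k' = j + x * (k / x + 1) := by
      have : x * (k / x + 1) = x * (k / x) + x := by ring
      omega
    rw [h3, Nat.add_mul_mod_self_left, Nat.mod_eq_of_lt hj]
  have hround' : ∀ j < x, ((j + k') % x + k) % x = j := by
    intro j hj
    rw [Nat.mod_add_mod]
    have h1 := Nat.div_add_mod k x
    have h2 : k % x < x := Nat.mod_lt _ hx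
    have h3 : j + k' + k = j + x * (k / x + 1) := by
      have : x * (k / x + 1) = x * (k / x) + x := by ring
      omega
    rw [h3, Nat.add_mul_mod_self_left, Nat.mod_eq_of_lt hj]
  apply Finset.card_nbij' (fun j => (j + k) % x) (fun j => (j + k') % x)
  · intro j hj
    simp only [Finset.mem_coe, mem_filter, mem_range] at hj ⊢
    exact ⟨hmodlt j, hj.2⟩
  · intro j hj
    simp only [Finset.mem_coe, mem_filter, mem_range] at hj ⊢
    refine ⟨Nat.mod_lt _ hx, ?_⟩
    rw [hround' j hj.1]
    exact hj.2
  · intro j hj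
    simp only [Finset.mem_coe, mem_filter, mem_range] at hj
    exact hround j hj.1
  · intro j hj
    simp only [Finset.mem_coe, mem_filter, mem_range] at hj
    exact hround' j hj.1

lemma filter_lt_range (x ρ : ℕ) (h : ρ ≤ x) :
    ((Finset.range x).filter (fun j => j < ρ)).card = ρ := by
  have : (Finset.range x).filter (fun j => j < ρ) = Finset.range ρ := by
    ext j; simp only [mem_filter, mem_range]; omega
  rw [this, card_range]

/-- cardinality of a cyclic interval of length `ρ ≤ x`. -/
lemma cyc_interval_card (x r ρ : ℕ) (hx : 0 < x) (hρ : ρ ≤ x) :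
    ((Finset.range x).filter (fun j => (j + (x - r % x)) % x < ρ)).card = ρ := by
  rw [cyc_count x (x - r % x) hx (fun z => z < ρ), filter_lt_range x ρ hρ]

open Finset

lemma mod_cancel_aux (m L w d : ℕ) (hw : w < m) (hd : d < m)
    (h : (L + w) % m = (L + d) % m) : w = d := by
  have h2 : w ≡ d [MOD m] := Nat.ModEq.add_left_cancel' L h
  have h3 : w % m = d % m := h2
  rwa [Nat.mod_eq_of_lt hw, Nat.mod_eq_of_lt hd] at h3

/-- number of elements `≡ v (mod m)` in an interval of length `len ≤ m`. -/
lemma Ico_mod_count (m L len v : ℕ) (hm : 0 < m) (hlen : len ≤ m) (hv : v < m) :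
    ((Finset.Ico L (L+len)).filter (fun s => s % m = v)).card
      = if (v + (m - L % m)) % m < len then 1 else 0 := by
  set d : ℕ := (v + (m - L % m)) % m with hd
  have hdlt : d < m := Nat.mod_lt _ hm
  have e1 : (L + d) % m = v := by
    rw [hd, Nat.add_mod_mod]
    have h1 := Nat.div_add_mod L m
    have h2 : L % m < m := Nat.mod_lt _ hm
    have h3 : L + (v + (m - L % m)) = v + m * (L / m + 1) := by
      have : m * (L / m + 1) = m * (L / m) + m := by ring
      omega
    rw [h3, Nat.add_mul_mod_self_left, Nat.mod_eq_of_lt hv]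
  have key : (Finset.Ico L (L+len)).filter (fun s => s % m = v)
      = if d < len then {L + d} else ∅ := by
    ext s
    simp only [mem_filter, Finset.mem_Ico]
    split_ifs with hcase
    · simp only [Finset.mem_singleton]
      constructor
      · rintro ⟨⟨h1, h2⟩, h3⟩
        have hsw : s = L + (s - L) := by omega
        have hwm : s - L < m := by omega
        have heq : (L + (s - L)) % m = (L + d) % m := by rw [← hsw, h3, e1]
        have := mod_cancel_aux m L (s - L) d hwm hdlt heq
        omega
      · rintro rfl
        exact ⟨⟨by omega, by omega⟩, e1⟩
    · simp only [Finset.notMem_empty, iff_false]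
      rintro ⟨⟨h1, h2⟩, h3⟩
      have hsw : s = L + (s - L) := by omega
      have hwm : s - L < m := by omega
      have heq : (L + (s - L)) % m = (L + d) % m := by rw [← hsw, h3, e1]
      have := mod_cancel_aux m L (s - L) d hwm hdlt heq
      omega
  rw [key]
  split_ifs <;> simp

open Finset

/-- concatenated cyclic intervals: counting rows `j < N` whose cyclic interval
(starting at the partial sum of lengths, length `len j ≤ m`) covers residue `v`
equals counting integers `< ∑ len` congruent to `v` mod `m`. -/
lemma concat_count (m N : ℕ) (hm : 0 < m) (len : ℕ → ℕ) (hlen : ∀ j, len j ≤ m)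
    (v : ℕ) (hv : v < m) :
    ((Finset.range N).filter (fun j =>
        (v + (m - (∑ j' ∈ Finset.range j, len j') % m)) % m < len j)).card
      = ((Finset.range (∑ j' ∈ Finset.range N, len j')).filter (fun s => s % m = v)).card := by
  induction N with
  | zero => simp
  | succ N ih =>
    rw [Finset.range_add_one, Finset.filter_insert]
    have hsum : ∑ j' ∈ Finset.range (N+1), len j'
        = (∑ j' ∈ Finset.range N, len j') + len N := Finset.sum_range_succ _ _
    set F : ℕ := ∑ j' ∈ Finset.range N, len j' with hF
    have hsplit : (Finset.range (F + len N)).filter (fun s => s % m = v)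
        = ((Finset.range F).filter (fun s => s % m = v))
          ∪ ((Finset.Ico F (F + len N)).filter (fun s => s % m = v)) := by
      rw [Finset.range_eq_Ico, Finset.range_eq_Ico, ← Finset.filter_union,
        Finset.Ico_union_Ico_eq_Ico (Nat.zero_le _) (Nat.le_add_right _ _),
        ← Finset.range_eq_Ico]
    have hdisj : Disjoint ((Finset.range F).filter (fun s => s % m = v))
        ((Finset.Ico F (F + len N)).filter (fun s => s % m = v)) := by
      apply Finset.disjoint_filter_filter
      rw [Finset.range_eq_Ico]
      exact Finset.Ico_disjoint_Ico_consecutive 0 F (F + len N)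
    rw [show (∑ j' ∈ insert N (Finset.range N), len j') = F + len N from by
        rw [← Finset.range_add_one, hsum], hsplit, Finset.card_union_of_disjoint hdisj, ← ih,
      Ico_mod_count m F (len N) v hm (hlen N) hv]
    split_ifs with hc
    · rw [Finset.card_insert_of_notMem (by simp)]
    · simp

open Finset

/-- number of `s < T` with `s % m = v` (for `v < m`). -/
lemma range_mod_count (m T v : ℕ) (hm : 0 < m) (hv : v < m) :
    ((Finset.range T).filter (fun s => s % m = v)).card
      = T / m + if v < T % m then 1 else 0 := by
  induction T with
  | zero => simp [Nat.ne_zero_of_lt hm]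
  | succ T ih =>
    rw [Finset.range_add_one, Finset.filter_insert]
    have h1 := Nat.div_add_mod T m
    have h2 := Nat.div_add_mod (T+1) m
    have h3 : T % m < m := Nat.mod_lt _ hm
    have h4 : (T+1) % m < m := Nat.mod_lt _ hm
    have h5 : T / m ≤ (T+1) / m := Nat.div_le_div_right (by omega)
    have h6 : (T+1) / m ≤ T / m + 1 := by
      have h7 := Nat.add_div_right T hm
      have h8 := Nat.div_le_div_right (c := m) (show T + 1 ≤ T + m by omega)
      omega
    have hmul : m * (T/m + 1) = m * (T/m) + m := by ring
    have hcase : (T+1)/m = T/m ∨ (T+1)/m = T/m + 1 := by omega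
    have step : (if T % m = v then
          insert T ((Finset.range T).filter (fun s => s % m = v))
        else ((Finset.range T).filter (fun s => s % m = v))).card
        = ((Finset.range T).filter (fun s => s % m = v)).card
          + (if T % m = v then 1 else 0) := by
      split_ifs
      · rw [Finset.card_insert_of_notMem (by simp)]
      · simp
    rw [step, ih]
    rcases hcase with hc | hc
    · have he : (T+1) % m = T % m + 1 := by rw [hc] at h2; omega
      rw [hc, he]; split_ifs <;> omega
    · have he1 : T % m = m - 1 := by rw [hc, hmul] at h2; omega
      have he2 : (T+1) % m = 0 := by rw [hc, hmul] at h2; omega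
      rw [hc, he2, he1]; split_ifs <;> omega

open Finset

lemma split_count (n x : ℕ) (hxn : x ≤ n) (Q : ℕ → Prop) [DecidablePred Q] :
    ((Finset.range n).filter Q).card
      = ((Finset.range x).filter Q).card
        + ((Finset.range (n - x)).filter (fun j' => Q (x + j'))).card := by
  have hsplit : (Finset.range n).filter Q
      = ((Finset.range x).filter Q) ∪ ((Finset.Ico x n).filter Q) := by
    rw [Finset.range_eq_Ico, Finset.range_eq_Ico, ← Finset.filter_union,
      Finset.Ico_union_Ico_eq_Ico (Nat.zero_le _) hxn, ← Finset.range_eq_Ico]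
  have hdisj : Disjoint ((Finset.range x).filter Q) ((Finset.Ico x n).filter Q) := by
    apply Finset.disjoint_filter_filter
    rw [Finset.range_eq_Ico]
    exact Finset.Ico_disjoint_Ico_consecutive 0 x n
  rw [hsplit, Finset.card_union_of_disjoint hdisj]
  congr 1
  apply Finset.card_nbij' (fun j => j - x) (fun j' => x + j')
  · intro j hj; simp only [Finset.mem_coe, mem_filter, Finset.mem_Ico, mem_range] at hj ⊢
    refine ⟨by omega, ?_⟩
    rw [show x + (j - x) = j by omega]
    exact hj.2
  · intro j hj; simp only [Finset.mem_coe, mem_filter, Finset.mem_Ico, mem_range] at hj ⊢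
    exact ⟨⟨by omega, by omega⟩, hj.2⟩
  · intro j hj; simp only [Finset.mem_coe, mem_filter, Finset.mem_Ico] at hj ⊢; omega
  · intro j hj; simp only [Finset.mem_coe, mem_filter, mem_range] at hj ⊢; omega

open Finset

/-! Construction: parameters t x c m; ts = m*(x-c); board is n × n with n = x + m.
Big rows/cols are indices < x, small ones are ≥ x. -/

def tsF (x c m : ℕ) : ℕ := m * (x - c)
def gamF (x c m i : ℕ) : ℕ := tsF x c m / x + (if i < tsF x c m % x then 1 else 0)
def rhoF (t x c m i : ℕ) : ℕ := t + 1 - gamF x c m i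
def RF (t x c m i : ℕ) : ℕ := ∑ i' ∈ Finset.range i, rhoF t x c m i'
def tbF (t x c m : ℕ) : ℕ := RF t x c m x
def colbF (t x c m j : ℕ) : ℕ :=
  tbF t x c m / x + (if j < tbF t x c m % x then 1 else 0)
def betF (t x c m j : ℕ) : ℕ := t + 1 - colbF t x c m j
def BF (t x c m j : ℕ) : ℕ := ∑ j' ∈ Finset.range j, betF t x c m j'

def memF (t x c m : ℕ) (p : ℕ × ℕ) : Bool :=
  if p.1 < x then
    (if p.2 < x then
      decide ((p.2 + (x - RF t x c m p.1 % x)) % x < rhoF t x c m p.1)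
    else
      decide ((p.1 + (x - ((p.2 - x) * (x - c)) % x)) % x < (x - c)))
  else
    (if p.2 < x then
      decide ((p.1 - x + (m - BF t x c m p.2 % m)) % m < betF t x c m p.2)
    else true)

section facts
variable (t x c m : ℕ)

lemma gam_le (hx : 0 < x) (hts : tsF x c m ≤ t * x) (i : ℕ) :
    gamF x c m i ≤ t + 1 := by
  have h1 : tsF x c m / x ≤ t := by
    have h2 : tsF x c m / x ≤ (t * x) / x := Nat.div_le_div_right hts
    rwa [Nat.mul_div_cancel _ hx] at h2
  unfold gamF; split_ifs <;> omega

lemma rho_le (hx : 0 < x) (hkey : t + 1 ≤ x + tsF x c m / x) (i : ℕ) :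
    rhoF t x c m i ≤ x := by
  unfold rhoF gamF; split_ifs <;> omega

lemma sum_gam (hx : 0 < x) : ∑ i ∈ Finset.range x, gamF x c m i = tsF x c m := by
  unfold gamF
  rw [Finset.sum_add_distrib, Finset.sum_const, ← Finset.card_filter]
  have h1 : ((Finset.range x).filter (fun i => i < tsF x c m % x)).card
      = tsF x c m % x := filter_lt_range x _ (le_of_lt (Nat.mod_lt _ hx))
  rw [h1, card_range, smul_eq_mul]
  have := Nat.div_add_mod (tsF x c m) x
  omega

lemma tb_eq (hx : 0 < x) (hts : tsF x c m ≤ t * x) :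
    tbF t x c m = x * (t+1) - tsF x c m ∧ tsF x c m ≤ x * (t+1) := by
  have h2 : tsF x c m ≤ x * (t + 1) := by
    calc tsF x c m ≤ t * x := hts
    _ ≤ x * (t+1) := by nlinarith
  constructor
  · unfold tbF RF
    have h3 : ∀ i ∈ Finset.range x, rhoF t x c m i + gamF x c m i = t + 1 := by
      intro i _
      have := gam_le t x c m hx hts i
      unfold rhoF; omega
    have h4 : (∑ i' ∈ Finset.range x, rhoF t x c m i') + (∑ i ∈ Finset.range x, gamF x c m i)
        = x * (t+1) := by
      rw [← Finset.sum_add_distrib, Finset.sum_congr rfl h3, Finset.sum_const, card_range,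
        smul_eq_mul]
    have h5 := sum_gam x c m hx
    omega
  · exact h2

lemma colb_le (hx : 0 < x) (hts : tsF x c m ≤ t * x) (j : ℕ) :
    colbF t x c m j ≤ t + 1 := by
  obtain ⟨htb, hle⟩ := tb_eq t x c m hx hts
  unfold colbF
  rcases Nat.eq_zero_or_pos (tsF x c m) with h0 | h0
  · have : tbF t x c m = x * (t+1) := by omega
    rw [this, Nat.mul_div_cancel_left _ hx, Nat.mul_mod_right]
    simp
  · have h1 : tbF t x c m ≤ x * (t+1) - 1 := by omega
    have h2 : tbF t x c m / x ≤ (x * (t+1) - 1) / x := Nat.div_le_div_right h1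
    have h3 : (x * (t+1) - 1) / x ≤ t := by
      rw [Nat.div_le_iff_le_mul_add_pred hx]
      have : x * (t+1) = x * t + x := by ring
      omega
    split_ifs <;> omega

lemma bet_le (hx : 0 < x) (hts : tsF x c m ≤ t * x) (htsm : tsF x c m ≤ x * m) (j : ℕ) :
    betF t x c m j ≤ m := by
  obtain ⟨htb, hle⟩ := tb_eq t x c m hx hts
  rcases le_or_gt (t+1) m with hm | hm
  · unfold betF; omega
  · have h1 : x * (t + 1 - m) + x * m = x * (t+1) := by
      rw [← Nat.mul_add]; congr 1; omega
    have h2 : x * (t + 1 - m) ≤ tbF t x c m := by omega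
    have h3 : t + 1 - m ≤ tbF t x c m / x := by
      rw [Nat.le_div_iff_mul_le hx, Nat.mul_comm]; exact h2
    unfold betF colbF; split_ifs <;> omega

lemma sum_colb (hx : 0 < x) : ∑ j ∈ Finset.range x, colbF t x c m j = tbF t x c m := by
  unfold colbF
  rw [Finset.sum_add_distrib, Finset.sum_const, ← Finset.card_filter]
  have h1 : ((Finset.range x).filter (fun j => j < tbF t x c m % x)).card
      = tbF t x c m % x := filter_lt_range x _ (le_of_lt (Nat.mod_lt _ hx))
  rw [h1, card_range, smul_eq_mul]
  have := Nat.div_add_mod (tbF t x c m) x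
  omega

lemma B_eq (hx : 0 < x) (hts : tsF x c m ≤ t * x) :
    BF t x c m x = tsF x c m := by
  obtain ⟨htb, hle⟩ := tb_eq t x c m hx hts
  have h3 : ∀ j ∈ Finset.range x, betF t x c m j + colbF t x c m j = t + 1 := by
    intro j _
    have := colb_le t x c m hx hts j
    unfold betF; omega
  have h4 : BF t x c m x + (∑ j ∈ Finset.range x, colbF t x c m j) = x * (t+1) := by
    unfold BF
    rw [← Finset.sum_add_distrib, Finset.sum_congr rfl h3, Finset.sum_const, card_range,
      smul_eq_mul]
  have h5 := sum_colb t x c m hx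
  omega

end facts

open Finset

lemma const_concat (x N L v : ℕ) (hx : 0 < x) (hL : L ≤ x) (hv : v < x) :
    ((Finset.range N).filter (fun j => (v + (x - (j * L) % x)) % x < L)).card
      = ((Finset.range (N * L)).filter (fun s => s % x = v)).card := by
  have h := concat_count x N hx (fun _ => L) (fun _ => hL) v hv
  simpa [Finset.sum_const, card_range, smul_eq_mul] using h

section counts
variable (t x c m : ℕ)
variable (hx : 0 < x) (hcx : c ≤ x) (hts : tsF x c m ≤ t * x)
  (hkey : t + 1 ≤ x + tsF x c m / x) (htsm : tsF x c m ≤ x * m)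

include hx hcx hts hkey htsm

lemma row_big (i : ℕ) (hi : i < x) :
    ((Finset.range (x+m)).filter (fun j => memF t x c m (i, j) = true)).card = t + 1 := by
  rw [split_count (x+m) x (by omega)]
  have e1 : ((Finset.range x).filter (fun j => memF t x c m (i,j) = true)).card
      = rhoF t x c m i := by
    have hcong : ∀ j ∈ Finset.range x, (memF t x c m (i,j) = true
        ↔ ((j + (x - RF t x c m i % x)) % x < rhoF t x c m i)) := by
      intro j hj; simp only [mem_range] at hj
      simp [memF, hi, hj]
    rw [Finset.filter_congr hcong]
    exact cyc_interval_card x (RF t x c m i) _ hx (rho_le t x c m hx hkey i)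
  have e2 : ((Finset.range ((x+m)-x)).filter
      (fun j' => memF t x c m (i, x+j') = true)).card = gamF x c m i := by
    rw [show (x+m)-x = m by omega]
    have hcong : ∀ j' ∈ Finset.range m, (memF t x c m (i, x+j') = true
        ↔ ((i + (x - (j' * (x-c)) % x)) % x < x - c)) := by
      intro j' _
      have h2 : ¬ (x + j' < x) := by omega
      simp [memF, hi, h2]
    rw [Finset.filter_congr hcong, const_concat x m (x-c) i hx (by omega) hi]
    rw [show m * (x-c) = tsF x c m from rfl,
      range_mod_count x (tsF x c m) i hx hi]
    rfl
  rw [e1, e2]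
  have := gam_le t x c m hx hts i
  unfold rhoF
  omega

lemma row_small (i : ℕ) (hi1 : x ≤ i) (hi2 : i < x + m) :
    ((Finset.range (x+m)).filter (fun j => memF t x c m (i, j) = true)).card
      = (x - c) + m := by
  have hm : 0 < m := by omega
  rw [split_count (x+m) x (by omega)]
  have e1 : ((Finset.range x).filter (fun j => memF t x c m (i,j) = true)).card
      = x - c := by
    have hcong : ∀ j ∈ Finset.range x, (memF t x c m (i,j) = true
        ↔ ((i - x + (m - (∑ j' ∈ Finset.range j, betF t x c m j') % m)) % m
            < betF t x c m j)) := by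
      intro j hj; simp only [mem_range] at hj
      have h2 : ¬ (i < x) := by omega
      simp [memF, h2, hj, BF]
      exact ⟨of_decide_eq_true, decide_eq_true⟩
    rw [Finset.filter_congr hcong,
      concat_count m x hm (betF t x c m) (bet_le t x c m hx hts htsm) (i-x) (by omega)]
    rw [show (∑ j' ∈ Finset.range x, betF t x c m j') = BF t x c m x from rfl,
      B_eq t x c m hx hts, range_mod_count m (tsF x c m) (i-x) hm (by omega)]
    rw [show tsF x c m = m * (x - c) from rfl, Nat.mul_div_cancel_left _ hm,
      Nat.mul_mod_right]
    simp
  have e2 : ((Finset.range ((x+m)-x)).filter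
      (fun j' => memF t x c m (i, x+j') = true)).card = m := by
    rw [show (x+m)-x = m by omega]
    have hcong : ∀ j' ∈ Finset.range m, (memF t x c m (i, x+j') = true ↔ True) := by
      intro j' _
      have h2 : ¬ (i < x) := by omega
      have h3 : ¬ (x + j' < x) := by omega
      simp [memF, h2, h3]
    rw [Finset.filter_congr hcong, Finset.filter_true_of_mem (by simp), card_range]
  rw [e1, e2]

lemma col_big (j : ℕ) (hj : j < x) :
    ((Finset.range (x+m)).filter (fun i => memF t x c m (i, j) = true)).card = t + 1 := by
  rw [split_count (x+m) x (by omega)]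
  have e1 : ((Finset.range x).filter (fun i => memF t x c m (i,j) = true)).card
      = colbF t x c m j := by
    have hcong : ∀ i ∈ Finset.range x, (memF t x c m (i,j) = true
        ↔ ((j + (x - (∑ i' ∈ Finset.range i, rhoF t x c m i') % x)) % x
            < rhoF t x c m i)) := by
      intro i hi; simp only [mem_range] at hi
      simp [memF, hi, hj, RF]
      exact ⟨of_decide_eq_true, decide_eq_true⟩
    rw [Finset.filter_congr hcong,
      concat_count x x hx (rhoF t x c m) (rho_le t x c m hx hkey) j hj]
    rw [show (∑ i' ∈ Finset.range x, rhoF t x c m i') = tbF t x c m from rfl,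
      range_mod_count x (tbF t x c m) j hx hj]
    rfl
  have e2 : ((Finset.range ((x+m)-x)).filter
      (fun i' => memF t x c m (x+i', j) = true)).card = betF t x c m j := by
    rw [show (x+m)-x = m by omega]
    rcases Nat.eq_zero_or_pos m with hm | hm
    · have hbet : betF t x c m j = 0 := by
        have h0 : tsF x c m = 0 := by rw [show tsF x c m = m * (x-c) from rfl, hm]; ring
        obtain ⟨htb, _⟩ := tb_eq t x c m hx hts
        have htb2 : tbF t x c m = x * (t+1) := by omega
        unfold betF colbF
        rw [htb2, Nat.mul_div_cancel_left _ hx, Nat.mul_mod_right]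
        simp
      rw [hbet, hm]
      simp
    · have hcong : ∀ i' ∈ Finset.range m, (memF t x c m (x+i',j) = true
          ↔ ((i' + (m - BF t x c m j % m)) % m < betF t x c m j)) := by
        intro i' _
        have h2 : ¬ (x + i' < x) := by omega
        simp [memF, h2, hj]
      rw [Finset.filter_congr hcong]
      exact cyc_interval_card m (BF t x c m j) _ hm (bet_le t x c m hx hts htsm j)
  rw [e1, e2]
  have := colb_le t x c m hx hts j
  unfold betF
  omega

lemma col_small (j : ℕ) (hj1 : x ≤ j) (hj2 : j < x + m) :
    ((Finset.range (x+m)).filter (fun i => memF t x c m (i, j) = true)).card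
      = (x - c) + m := by
  rw [split_count (x+m) x (by omega)]
  have e1 : ((Finset.range x).filter (fun i => memF t x c m (i,j) = true)).card
      = x - c := by
    have hcong : ∀ i ∈ Finset.range x, (memF t x c m (i,j) = true
        ↔ ((i + (x - ((j - x) * (x-c)) % x)) % x < x - c)) := by
      intro i hi; simp only [mem_range] at hi
      have h2 : ¬ (j < x) := by omega
      simp [memF, hi, h2]
    rw [Finset.filter_congr hcong]
    exact cyc_interval_card x ((j-x)*(x-c)) _ hx (by omega)
  have e2 : ((Finset.range ((x+m)-x)).filter
      (fun i' => memF t x c m (x+i', j) = true)).card = m := by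
    rw [show (x+m)-x = m by omega]
    have hcong : ∀ i' ∈ Finset.range m, (memF t x c m (x+i', j) = true ↔ True) := by
      intro i' _
      have h2 : ¬ (x + i' < x) := by omega
      have h3 : ¬ (j < x) := by omega
      simp [memF, h2, h3]
    rw [Finset.filter_congr hcong, Finset.filter_true_of_mem (by simp), card_range]
  rw [e1, e2]

end counts

open Finset

section fib
variable {Pred : ℕ × ℕ → Prop} [DecidablePred Pred] (n : ℕ)

lemma fiber_row (i : ℕ) (hi : i < n) :
    (((Finset.range n ×ˢ Finset.range n).filter Pred).filter (fun q => q.1 = i)).card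
      = ((Finset.range n).filter (fun j => Pred (i, j))).card := by
  apply Finset.card_nbij' (fun q => q.2) (fun j => (i, j))
  · intro q hq
    simp only [Finset.mem_coe, mem_filter, Finset.mem_product, mem_range] at hq ⊢
    obtain ⟨⟨⟨h1, h2⟩, h3⟩, h4⟩ := hq
    refine ⟨h2, ?_⟩
    have : (i, q.2) = q := by rw [← h4]
    rw [this]; exact h3
  · intro j hj
    simp only [Finset.mem_coe, mem_filter, Finset.mem_product, mem_range] at hj ⊢
    exact ⟨⟨⟨hi, hj.1⟩, hj.2⟩, trivial⟩
  · intro q hq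
    simp only [Finset.mem_coe, mem_filter, Finset.mem_product, mem_range] at hq
    obtain ⟨⟨⟨h1, h2⟩, h3⟩, h4⟩ := hq
    rw [← h4]
  · intro j hj; rfl

lemma fiber_col (j : ℕ) (hj : j < n) :
    (((Finset.range n ×ˢ Finset.range n).filter Pred).filter (fun q => q.2 = j)).card
      = ((Finset.range n).filter (fun i => Pred (i, j))).card := by
  apply Finset.card_nbij' (fun q => q.1) (fun i => (i, j))
  · intro q hq
    simp only [Finset.mem_coe, mem_filter, Finset.mem_product, mem_range] at hq ⊢
    obtain ⟨⟨⟨h1, h2⟩, h3⟩, h4⟩ := hq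
    refine ⟨h1, ?_⟩
    have : (q.1, j) = q := by rw [← h4]
    rw [this]; exact h3
  · intro i hi
    simp only [Finset.mem_coe, mem_filter, Finset.mem_product, mem_range] at hi ⊢
    exact ⟨⟨⟨hi.1, hj⟩, hi.2⟩, trivial⟩
  · intro q hq
    simp only [Finset.mem_coe, mem_filter, Finset.mem_product, mem_range] at hq
    obtain ⟨⟨⟨h1, h2⟩, h3⟩, h4⟩ := hq
    rw [← h4]
  · intro i hi; rfl

lemma D_card_rows :
    ((Finset.range n ×ˢ Finset.range n).filter Pred).card
      = ∑ i ∈ Finset.range n, ((Finset.range n).filter (fun j => Pred (i, j))).card := by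
  rw [Finset.card_eq_sum_card_fiberwise (f := Prod.fst) (t := Finset.range n)
    (fun p hp => by simp only [Finset.mem_coe, mem_filter, Finset.mem_product, mem_range] at hp; simpa using hp.1.1)]
  exact Finset.sum_congr rfl (fun i hi => fiber_row n i (by simpa using hi))

end fib

lemma orcard (D : Finset (ℕ × ℕ)) (p : ℕ × ℕ) (hp : p ∉ D) :
    (D.filter (fun q => (q.1 = p.1 ∧ q.2 ≠ p.2) ∨ (q.2 = p.2 ∧ q.1 ≠ p.1))).card
      = (D.filter (fun q => q.1 = p.1)).card + (D.filter (fun q => q.2 = p.2)).card := by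
  rw [Finset.filter_or, Finset.card_union_of_disjoint]
  · congr 1
    · apply congrArg
      apply Finset.filter_congr
      intro q hq
      constructor
      · exact fun h => h.1
      · intro h
        refine ⟨h, fun h2 => hp ?_⟩
        have : q = p := Prod.ext h h2
        rwa [← this]
    · apply congrArg
      apply Finset.filter_congr
      intro q hq
      constructor
      · exact fun h => h.1
      · intro h
        refine ⟨h, fun h2 => hp ?_⟩
        have : q = p := Prod.ext h2 h
        rwa [← this]
  · rw [Finset.disjoint_left]
    intro q hq1 hq2
    simp only [mem_filter] at hq1 hq2
    exact hq1.2.2 hq2.2.1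

open Finset

lemma int_self_le_sq (z : ℤ) : z ≤ z^2 := by
  rcases le_or_gt z 0 with h | h
  · nlinarith [sq_nonneg z]
  · have h1 : 1 ≤ z := h
    nlinarith

lemma lower_bound (t c n : ℕ) (hc : 1 ≤ c) (hn : n = t + c) (a : ℕ) (ha : a = 2*t + 1)
    (D : Finset (ℕ × ℕ)) (hD : D ⊆ Finset.range n ×ˢ Finset.range n)
    (hdom : ∀ p ∈ Finset.range n ×ˢ Finset.range n, p ∉ D →
      a ≤ (D.filter (fun q =>
        (q.1 = p.1 ∧ q.2 ≠ p.2) ∨ (q.2 = p.2 ∧ q.1 ≠ p.1))).card) :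
    (2*c - 1)*(t*n) + n*c ≤ (2*c - 1) * D.card := by
  classical
  set k := D.card with hk
  set r : ℕ → ℕ := fun i => (D.filter (fun q => q.1 = i)).card with hr
  set cc : ℕ → ℕ := fun j => (D.filter (fun q => q.2 = j)).card with hcc
  have hmaps1 : ∀ p ∈ D, p.1 ∈ Finset.range n := fun p hp => by
    have := hD hp; simp only [Finset.mem_product] at this; exact this.1
  have hmaps2 : ∀ p ∈ D, p.2 ∈ Finset.range n := fun p hp => by
    have := hD hp; simp only [Finset.mem_product] at this; exact this.2
  have h1 : ∑ i ∈ Finset.range n, r i = k :=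
    (Finset.card_eq_sum_card_fiberwise hmaps1).symm
  have h2 : ∑ j ∈ Finset.range n, cc j = k :=
    (Finset.card_eq_sum_card_fiberwise hmaps2).symm
  set E := (Finset.range n ×ˢ Finset.range n) \ D with hE
  have hEcard : E.card = n*n - k := by
    rw [hE, Finset.card_sdiff_of_subset hD, Finset.card_product, Finset.card_range]
  have hkn : k ≤ n*n := by
    calc k = D.card := rfl
    _ ≤ (Finset.range n ×ˢ Finset.range n).card := Finset.card_le_card hD
    _ = n*n := by rw [Finset.card_product, Finset.card_range]
  -- pointwise domination inequality on empty cells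
  have hpt : ∀ p ∈ E, (a:ℤ) ≤ (r p.1 : ℤ) + (cc p.2 : ℤ) := by
    intro p hp
    rw [hE, Finset.mem_sdiff] at hp
    have := hdom p hp.1 hp.2
    have horc := orcard D p hp.2
    rw [horc] at this
    exact_mod_cast this
  have S1 : (a:ℤ) * E.card ≤ ∑ p ∈ E, ((r p.1 : ℤ) + (cc p.2 : ℤ)) := by
    calc (a:ℤ) * E.card = ∑ _p ∈ E, (a:ℤ) := by rw [Finset.sum_const, nsmul_eq_mul, mul_comm]
    _ ≤ _ := Finset.sum_le_sum hpt
  -- row sums over grid and over D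
  have Sgrid : ∑ p ∈ (Finset.range n ×ˢ Finset.range n), (r p.1 : ℤ) = (n:ℤ) * k := by
    rw [Finset.sum_product]
    have : ∀ i ∈ Finset.range n, ∑ _j ∈ Finset.range n, (r i : ℤ) = (n:ℤ) * r i := by
      intro i _; rw [Finset.sum_const, Finset.card_range, nsmul_eq_mul]
    rw [Finset.sum_congr rfl this, ← Finset.mul_sum]
    congr 1
    exact_mod_cast congrArg (Nat.cast (R := ℤ)) h1
  have SD : ∑ p ∈ D, (r p.1 : ℤ) = ∑ i ∈ Finset.range n, (r i : ℤ)^2 := by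
    rw [← Finset.sum_fiberwise_of_maps_to hmaps1 (fun p => (r p.1 : ℤ))]
    apply Finset.sum_congr rfl
    intro i _
    have : ∀ p ∈ D.filter (fun q => q.1 = i), (r p.1 : ℤ) = (r i : ℤ) := by
      intro p hp; rw [Finset.mem_filter] at hp; rw [hp.2]
    rw [Finset.sum_congr rfl this, Finset.sum_const, nsmul_eq_mul]
    rw [show (D.filter (fun q => q.1 = i)).card = r i from rfl]
    try ring
  have SE1 : ∑ p ∈ E, (r p.1 : ℤ) = (n:ℤ)*k - ∑ i ∈ Finset.range n, (r i : ℤ)^2 := by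
    rw [hE, Finset.sum_sdiff_eq_sub hD, Sgrid, SD]
  have Sgrid2 : ∑ p ∈ (Finset.range n ×ˢ Finset.range n), (cc p.2 : ℤ) = (n:ℤ) * k := by
    rw [Finset.sum_product_right]
    have : ∀ j ∈ Finset.range n, ∑ _i ∈ Finset.range n, (cc j : ℤ) = (n:ℤ) * cc j := by
      intro j _; rw [Finset.sum_const, Finset.card_range, nsmul_eq_mul]
    rw [Finset.sum_congr rfl this, ← Finset.mul_sum]
    congr 1
    exact_mod_cast congrArg (Nat.cast (R := ℤ)) h2
  have SD2 : ∑ p ∈ D, (cc p.2 : ℤ) = ∑ j ∈ Finset.range n, (cc j : ℤ)^2 := by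
    rw [← Finset.sum_fiberwise_of_maps_to hmaps2 (fun p => (cc p.2 : ℤ))]
    apply Finset.sum_congr rfl
    intro j _
    have : ∀ p ∈ D.filter (fun q => q.2 = j), (cc p.2 : ℤ) = (cc j : ℤ) := by
      intro p hp; rw [Finset.mem_filter] at hp; rw [hp.2]
    rw [Finset.sum_congr rfl this, Finset.sum_const, nsmul_eq_mul]
    rw [show (D.filter (fun q => q.2 = j)).card = cc j from rfl]
    try ring
  have SE2 : ∑ p ∈ E, (cc p.2 : ℤ) = (n:ℤ)*k - ∑ j ∈ Finset.range n, (cc j : ℤ)^2 := by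
    rw [hE, Finset.sum_sdiff_eq_sub hD, Sgrid2, SD2]
  set Sr : ℤ := ∑ i ∈ Finset.range n, (r i : ℤ)^2 with hSr
  set Sc : ℤ := ∑ j ∈ Finset.range n, (cc j : ℤ)^2 with hSc
  have In1 : (a:ℤ) * (n*n - k) ≤ ((n:ℤ)*k - Sr) + ((n:ℤ)*k - Sc) := by
    have hcast : ((E.card : ℤ)) = (n:ℤ)*n - k := by
      rw [hEcard]; push_cast [Nat.cast_sub hkn]; ring
    calc (a:ℤ) * (n*n - k) = (a:ℤ) * E.card := by rw [hcast]; try ring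
    _ ≤ ∑ p ∈ E, ((r p.1 : ℤ) + (cc p.2 : ℤ)) := S1
    _ = _ := by rw [Finset.sum_add_distrib, SE1, SE2]
  -- integrality: z ≤ z²  applied per row/column
  have In2 : (a:ℤ) * k - (n:ℤ)*(t*(t+1)) ≤ Sr := by
    rw [hSr]
    have hterm : ∀ i ∈ Finset.range n, (a:ℤ) * r i - (t:ℤ)*(t+1) ≤ (r i : ℤ)^2 := by
      intro i _
      have hz := int_self_le_sq ((r i : ℤ) - t)
      have : (a:ℤ) = 2*t+1 := by exact_mod_cast congrArg (Nat.cast (R := ℤ)) ha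
      nlinarith [hz]
    calc (a:ℤ) * k - (n:ℤ)*(t*(t+1))
        = ∑ i ∈ Finset.range n, ((a:ℤ) * r i - (t:ℤ)*(t+1)) := by
          rw [Finset.sum_sub_distrib, ← Finset.mul_sum, Finset.sum_const, Finset.card_range,
            nsmul_eq_mul]
          have : ((k:ℤ)) = ∑ i ∈ Finset.range n, (r i : ℤ) := by
            exact_mod_cast (congrArg (Nat.cast (R := ℤ)) h1).symm
          rw [← this]; try ring
    _ ≤ _ := Finset.sum_le_sum hterm
  have In3 : (a:ℤ) * k - (n:ℤ)*(t*(t+1)) ≤ Sc := by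
    rw [hSc]
    have hterm : ∀ j ∈ Finset.range n, (a:ℤ) * cc j - (t:ℤ)*(t+1) ≤ (cc j : ℤ)^2 := by
      intro j _
      have hz := int_self_le_sq ((cc j : ℤ) - t)
      have : (a:ℤ) = 2*t+1 := by exact_mod_cast congrArg (Nat.cast (R := ℤ)) ha
      nlinarith [hz]
    calc (a:ℤ) * k - (n:ℤ)*(t*(t+1))
        = ∑ j ∈ Finset.range n, ((a:ℤ) * cc j - (t:ℤ)*(t+1)) := by
          rw [Finset.sum_sub_distrib, ← Finset.mul_sum, Finset.sum_const, Finset.card_range,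
            nsmul_eq_mul]
          have : ((k:ℤ)) = ∑ j ∈ Finset.range n, (cc j : ℤ) := by
            exact_mod_cast (congrArg (Nat.cast (R := ℤ)) h2).symm
          rw [← this]; try ring
    _ ≤ _ := Finset.sum_le_sum hterm
  -- assemble
  have hfin : ((2*c - 1 : ℕ):ℤ)*(t*n) + (n:ℤ)*c ≤ ((2*c - 1 : ℕ):ℤ) * k := by
    have hcast : ((2*c - 1 : ℕ):ℤ) = 2*(c:ℤ) - 1 := by push_cast [Nat.cast_sub (by omega : 1 ≤ 2*c)]; ring
    rw [hcast]
    subst hn ha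
    push_cast at In1 In2 In3 ⊢
    linarith [In1, In2, In3]
  exact_mod_cast hfin

open Finset

lemma upper_bound (t x c m n a : ℕ) (hn : n = x + m) (hx : 0 < x) (hcx : c ≤ x)
    (hts : tsF x c m ≤ t * x) (hkey : t + 1 ≤ x + tsF x c m / x)
    (htsm : tsF x c m ≤ x * m) (hteq : x - c + m = t) (ha : a = 2*t + 1) :
    ∃ D : Finset (ℕ × ℕ), D ⊆ Finset.range n ×ˢ Finset.range n ∧
      D.card = t*n + x ∧
      ∀ p ∈ Finset.range n ×ˢ Finset.range n, p ∉ D →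
        a ≤ (D.filter (fun q =>
          (q.1 = p.1 ∧ q.2 ≠ p.2) ∨ (q.2 = p.2 ∧ q.1 ≠ p.1))).card := by
  subst hn
  set D : Finset (ℕ × ℕ) :=
    (Finset.range (x+m) ×ˢ Finset.range (x+m)).filter (fun p => memF t x c m p = true)
    with hD
  have hrow : ∀ i < x+m, ((Finset.range (x+m)).filter
      (fun j => memF t x c m (i, j) = true)).card = if i < x then t+1 else t := by
    intro i hi
    split_ifs with h
    · exact row_big t x c m hx hcx hts hkey htsm i h
    · rw [row_small t x c m hx hcx hts hkey htsm i (by omega) hi, hteq]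
  have hcol : ∀ j < x+m, ((Finset.range (x+m)).filter
      (fun i => memF t x c m (i, j) = true)).card = if j < x then t+1 else t := by
    intro j hj
    split_ifs with h
    · exact col_big t x c m hx hcx hts hkey htsm j h
    · rw [col_small t x c m hx hcx hts hkey htsm j (by omega) hj, hteq]
  refine ⟨D, Finset.filter_subset _ _, ?_, ?_⟩
  · rw [hD, D_card_rows]
    have h1 : ∀ i ∈ Finset.range (x+m), ((Finset.range (x+m)).filter
        (fun j => memF t x c m (i, j) = true)).card = t + if i < x then 1 else 0 := by
      intro i hi
      rw [hrow i (by simpa using hi)]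
      split_ifs <;> omega
    rw [Finset.sum_congr rfl h1, Finset.sum_add_distrib, Finset.sum_const, card_range,
      ← Finset.card_filter, filter_lt_range (x+m) x (by omega), smul_eq_mul]
    ring
  · intro p hp hpD
    simp only [Finset.mem_product, mem_range] at hp
    have hmemF : memF t x c m p = false := by
      rcases Bool.eq_false_or_eq_true (memF t x c m p) with h | h
      swap
      · exact h
      · exfalso
        apply hpD
        rw [hD, Finset.mem_filter]
        exact ⟨by simp only [Finset.mem_product, mem_range]; exact hp, h⟩
    have hnotboth : p.1 < x ∨ p.2 < x := by
      by_contra hcon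
      push_neg at hcon
      have : memF t x c m p = true := by
        simp [memF, Nat.not_lt.2 hcon.1, Nat.not_lt.2 hcon.2]
      rw [this] at hmemF; exact absurd hmemF (by simp)
    rw [orcard D p hpD]
    have e1 : (D.filter (fun q => q.1 = p.1)).card = if p.1 < x then t+1 else t := by
      rw [hD, fiber_row (x+m) p.1 hp.1, hrow p.1 hp.1]
    have e2 : (D.filter (fun q => q.2 = p.2)).card = if p.2 < x then t+1 else t := by
      rw [hD, fiber_col (x+m) p.2 hp.2, hcol p.2 hp.2]
    rw [e1, e2]
    rcases hnotboth with h | h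
    · simp only [h, if_true]; split_ifs <;> omega
    · simp only [h, if_true]; split_ifs <;> omega

open Finset

set_option maxHeartbeats 2000000 in
/-- for odd `a` with `n < a ≤ 2n−2` and `n ≥ 2`, the minimum size of an
`a`-dominating set of the rook's graph `K_n □ K_n` equals
`((a−1)/2)·n + ⌈n(2n−a+1)/(2(2n−a))⌉`. -/
theorem stmt_12 (n a : ℕ) (hn : 2 ≤ n) (ha1 : n < a) (ha2 : a ≤ 2 * n - 2)
    (haodd : Odd a) :
    sInf {k : ℕ | ∃ D : Finset (ℕ × ℕ), D ⊆ Finset.range n ×ˢ Finset.range n ∧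
      D.card = k ∧
      ∀ p ∈ Finset.range n ×ˢ Finset.range n, p ∉ D →
        a ≤ (D.filter (fun q =>
          (q.1 = p.1 ∧ q.2 ≠ p.2) ∨ (q.2 = p.2 ∧ q.1 ≠ p.1))).card} =
    ((a - 1) / 2) * n + (n * (2 * n - a + 1) + (2 * (2 * n - a)) - 1) / (2 * (2 * n - a)) := by
  obtain ⟨t, hat⟩ := haodd
  have ha : a = 2*t + 1 := by omega
  have hn4 : 4 ≤ n := by omega
  obtain ⟨c, hc⟩ : ∃ c, c = n - t := ⟨_, rfl⟩
  have hc2 : 2 ≤ c := by omega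
  have hcn : c + c ≤ n + 1 := by omega
  have htc : t + c = n := by omega
  have htpos : 1 ≤ t := by omega
  obtain ⟨b, hb⟩ : ∃ b, b = 2*c - 1 := ⟨_, rfl⟩
  have hbpos : 0 < b := by omega
  have hbn : b + 1 ≤ n := by omega
  obtain ⟨M, hM⟩ : ∃ M, M = (n*c + b - 1)/b := ⟨_, rfl⟩
  have hdm := Nat.div_add_mod (n*c + b - 1) b
  have hmod := Nat.mod_lt (n*c + b - 1) hbpos
  rw [← hM] at hdm
  have hM1 : n*c ≤ b*M := by omega
  have hM2 : b*M ≤ n*c + b - 1 := by omega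
  -- x ≤ n
  have hxn : M ≤ n := by
    by_contra hcon
    push_neg at hcon
    have h1 : b*(n+1) ≤ b*M := Nat.mul_le_mul_left b (by omega)
    have h2 : b*(n+1) = b*n + b := by ring
    have h3 : n*c ≤ n*b := Nat.mul_le_mul_left n (by omega)
    have h4 : n*b = b*n := by ring
    omega
  -- c ≤ x
  have hcx : c ≤ M := by
    by_contra hcon
    push_neg at hcon
    have h1 : b*M ≤ b*(c-1) := Nat.mul_le_mul_left b (by omega)
    have h2 : b*(c-1) + b = b*c := by rw [← Nat.mul_succ]; congr 1; omega
    have h3 : (b+1)*c ≤ n*c := Nat.mul_le_mul_right c (by omega)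
    have h4 : (b+1)*c = b*c + c := by ring
    omega
  have hx : 0 < M := by omega
  obtain ⟨m, hm⟩ : ∃ m, m = n - M := ⟨_, rfl⟩
  have hnm : n = M + m := by omega
  have hteq : M - c + m = t := by omega
  -- ts bounds
  have htsval : tsF M c m = m * (M - c) := rfl
  have hts : tsF M c m ≤ t * M := by
    rw [htsval, hm]
    zify [hcx, hxn, show c ≤ n by omega, show t ≤ n by omega]
    have h1 : (t:ℤ) = (n:ℤ) - c := by omega
    rw [h1]
    have h2 : (0:ℤ) ≤ (c:ℤ) := by positivity
    have h3 : (c:ℤ) ≤ n := by exact_mod_cast (show c ≤ n by omega)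
    nlinarith [sq_nonneg ((M:ℤ) - c), mul_le_mul_of_nonneg_right h3 h2]
  have htsm : tsF M c m ≤ M * m := by
    have h1 : m * (M - c) ≤ m * M := Nat.mul_le_mul_left m (Nat.sub_le _ _)
    have h2 : m * M = M * m := Nat.mul_comm m M
    rw [htsval]
    omega
  have hkey : t + 1 ≤ M + tsF M c m / M := by
    rcases le_or_gt (t+1) M with h | h
    · exact le_trans h (Nat.le_add_right _ _)
    · have h5 : (t + 1 - M) * M ≤ tsF M c m := by
        rw [htsval]
        zify [hcx, hxn, show M ≤ t+1 by omega]
        have h1 : (t:ℤ) = (n:ℤ) - c := by omega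
        have hM1' : (n:ℤ)*c ≤ (b:ℤ)*M := by exact_mod_cast hM1
        have hbc : (b:ℤ) = 2*(c:ℤ) - 1 := by
          rw [hb]; push_cast [Nat.cast_sub (show 1 ≤ 2*c by omega)]; ring
        rw [hbc] at hM1'
        have hmcast : (m:ℤ) = (n:ℤ) - M := by omega
        rw [hmcast, h1]
        nlinarith [hM1']
      have h6 : t + 1 - M ≤ tsF M c m / M := by
        rw [Nat.le_div_iff_mul_le hx]
        exact h5
      omega
  -- the two halves
  obtain ⟨D, hDsub, hDcard, hDdom⟩ :=
    upper_bound t M c m n a hnm hx hcx hts hkey htsm hteq ha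
  have hformula : (n * (2 * n - a + 1) + (2 * (2 * n - a)) - 1) / (2 * (2 * n - a)) = M := by
    have e1 : 2 * n - a = b := by omega
    rw [e1]
    have e2 : n * (b + 1) = n * (2*c) := by congr 1; omega
    rw [e2]
    apply Nat.div_eq_of_lt_le
    · have h1 : M * (2*b) = 2*(b*M) := by ring
      have h2 : n*(2*c) = 2*(n*c) := by ring
      omega
    · have h1 : (M+1) * (2*b) = 2*(b*M) + 2*b := by ring
      have h2 : n*(2*c) = 2*(n*c) := by ring
      omega
  have hhalf : (a-1)/2 = t := by omega
  rw [hformula, hhalf]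
  apply le_antisymm
  · apply Nat.sInf_le
    exact Set.mem_setOf.mpr ⟨D, hDsub, hDcard, hDdom⟩
  · apply le_csInf ⟨t*n + M, Set.mem_setOf.mpr ⟨D, hDsub, hDcard, hDdom⟩⟩
    rintro k ⟨D', hsub', hcard', hdom'⟩
    have hlow := lower_bound t c n (by omega) (by omega) a ha D' hsub' hdom'
    rw [hcard'] at hlow
    rw [← hb] at hlow
    by_contra hcon
    push_neg at hcon
    have h1 : k + 1 ≤ t*n + M := by omega
    have h2 : b*(k+1) ≤ b*(t*n + M) := Nat.mul_le_mul_left b h1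
    have h3 : b*(k+1) = b*k + b := by ring
    have h4 : b*(t*n + M) = b*(t*n) + b*M := by ring
    omega
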